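/- For all powers of two m and n with m ≥ 16, n ≥ 4, and m ≤ 4n, the group G(m,n) has order m·n. -/

import Mathlib

/-- The relators of the presentation `⟨a, b | a^m, b^n, [b,a] = a^4⟩`, where `a` is
`FreeGroup.of true`, `b` is `FreeGroup.of false`, and `[b,a] = b⁻¹a⁻¹ba`. -/
def GRels (m n : ℕ) : Set (FreeGroup Bool) :=
  { FreeGroup.of true ^ m,
    FreeGroup.of false ^ n,
    (FreeGroup.of false)⁻¹ * (FreeGroup.of true)⁻¹ * FreeGroup.of false *
      FreeGroup.of true * (FreeGroup.of true ^ 4)⁻¹ }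

/-- The group `G(m, n) = ⟨a, b | a^m, b^n, [b,a] = a^4⟩`. -/
abbrev Gmn (m n : ℕ) : Type := PresentedGroup (GRels m n)

/-- The image of the generator `a` in `G(m, n)`. -/
def gen_a (m n : ℕ) : Gmn m n := PresentedGroup.of true

/-- The image of the generator `b` in `G(m, n)`. -/
def gen_b (m n : ℕ) : Gmn m n := PresentedGroup.of false

lemma nine_pow_dvd (k : ℕ) : ((2:ℤ)^(k+3)) ∣ 9^(2^k) - 1 := by
  induction k with
  | zero => norm_num
  | succ k ih =>
    have h : (9:ℤ)^(2^(k+1)) - 1 = (9^(2^k) - 1) * (9^(2^k) + 1) := by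
      rw [pow_succ, pow_mul]; ring
    have h2 : (2:ℤ) ∣ 9^(2^k) + 1 := by
      have : Odd ((9:ℤ)^(2^k)) := Odd.pow (by decide)
      exact (Int.even_add_one.mpr (by simpa [Int.not_even_iff_odd] using this)).two_dvd
    calc ((2:ℤ)^(k+1+3)) = 2^(k+3) * 2 := by ring
    _ ∣ (9^(2^k) - 1) * (9^(2^k) + 1) := mul_dvd_mul ih h2
    _ = 9^(2^(k+1)) - 1 := h.symm

lemma neg3_pow (m n : ℕ) (hm : ∃ i, m = 2^i) (hn : ∃ j, n = 2^j)
    (hn4 : 4 ≤ n) (hmn : m ≤ 4 * n) : ((-3 : ZMod m))^n = 1 := by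
  obtain ⟨i, rfl⟩ := hm
  obtain ⟨j, rfl⟩ := hn
  have hj2 : 2 ≤ j := by
    by_contra h
    interval_cases j <;> omega
  have hij : i ≤ (j-1) + 3 := by
    have : (2:ℕ)^i ≤ 2^(j+2) := by
      calc (2:ℕ)^i ≤ 4 * 2^j := hmn
      _ = 2^(j+2) := by ring
    have := (pow_le_pow_iff_right₀ (a := 2) (by norm_num)).mp this
    omega
  have hdvd : (((2:ℕ)^i : ℕ) : ℤ) ∣ 9^(2^(j-1)) - 1 := by
    push_cast
    exact dvd_trans (pow_dvd_pow 2 hij) (nine_pow_dvd (j-1))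
  have h0 : ((9:ZMod (2^i)))^(2^(j-1)) - 1 = 0 := by
    have := (ZMod.intCast_zmod_eq_zero_iff_dvd (9^(2^(j-1)) - 1) (2^i)).mpr hdvd
    push_cast at this
    exact this
  have hn' : 2^j = 2 * 2^(j-1) := by
    rw [← pow_succ']
    congr 1
    omega
  rw [hn', pow_mul]
  norm_num
  rw [sub_eq_zero] at h0
  exact h0


section
variable (m n : ℕ)

lemma rel_one : ∀ r ∈ GRels m n, PresentedGroup.mk (GRels m n) r = 1 :=
  fun r hr => (QuotientGroup.eq_one_iff r).mpr (Subgroup.subset_normalClosure hr)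

lemma ha : (gen_a m n) ^ m = 1 := by
  have := rel_one m n _ (Set.mem_insert _ _)
  rwa [map_pow] at this

lemma hb : (gen_b m n) ^ n = 1 := by
  have := rel_one m n _ (Set.mem_insert_of_mem _ (Set.mem_insert _ _))
  rwa [map_pow] at this

lemma hconj1 : (gen_b m n)⁻¹ * gen_a m n * gen_b m n = (gen_a m n) ^ (-3 : ℤ) := by
  have := rel_one m n _ (Set.mem_insert_of_mem _ (Set.mem_insert_of_mem _ rfl))
  simp only [map_mul, map_inv, map_pow] at this
  set a := gen_a m n
  set b := gen_b m n
  have h4 : b⁻¹ * a⁻¹ * b * a = a ^ 4 := by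
    have := mul_eq_one_iff_eq_inv.mp this
    simp only [inv_inv] at this
    exact this
  have : b⁻¹ * a * b = (b⁻¹ * a⁻¹ * b)⁻¹ := by group
  rw [this]
  have h3 : b⁻¹ * a⁻¹ * b = a ^ 3 := by
    have : b⁻¹ * a⁻¹ * b = a^4 * a⁻¹ := by
      rw [← h4]; group
    rw [this]; group
  rw [h3]; group

lemma hconj : ∀ k : ℤ, (gen_b m n)⁻¹ * (gen_a m n) ^ k * gen_b m n = (gen_a m n) ^ (-3 * k) := by
  intro k
  set a := gen_a m n
  set b := gen_b m n
  have : b⁻¹ * a ^ k * b = (b⁻¹ * a * b) ^ k := by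
    calc b⁻¹ * a ^ k * b = (b⁻¹ * a * b⁻¹⁻¹) ^ k := by rw [conj_zpow, inv_inv]
    _ = (b⁻¹ * a * b) ^ k := by rw [inv_inv]
  rw [this, hconj1, ← zpow_mul, mul_comm]

lemma hmove : ∀ (j : ℕ) (k : ℤ),
    (gen_a m n) ^ k * (gen_b m n) ^ j = (gen_b m n) ^ j * (gen_a m n) ^ ((-3)^j * k) := by
  intro j
  induction j with
  | zero => simp
  | succ j ih =>
    intro k
    set a := gen_a m n
    set b := gen_b m n
    calc a ^ k * b ^ (j+1) = (a ^ k * b ^ j) * b := by rw [pow_succ]; group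
    _ = b ^ j * (a ^ ((-3)^j * k) * b) := by rw [ih]; group
    _ = b ^ j * (b * (b⁻¹ * a ^ ((-3)^j * k) * b)) := by group
    _ = b ^ (j+1) * a ^ ((-3)^(j+1) * k) := by
        rw [hconj]; rw [pow_succ]; ring_nf; group; rfl

lemma normal_form (hn1 : 1 ≤ n) (g : Gmn m n) : ∃ (j : ℕ) (k : ℤ), g = (gen_b m n) ^ j * (gen_a m n) ^ k := by
  induction g using PresentedGroup.induction_on with
  | H z =>
    induction z using FreeGroup.induction_on with
    | C1 => exact ⟨0, 0, by simp⟩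
    | of x =>
      cases x
      · exact ⟨1, 0, by simp [gen_b, PresentedGroup.of]⟩
      · exact ⟨0, 1, by simp [gen_a, PresentedGroup.of]⟩
    | inv_of x _ =>
      cases x
      · refine ⟨n - 1, 0, ?_⟩
        have : (gen_b m n) ^ (n-1) = (gen_b m n)⁻¹ * (gen_b m n) ^ n := by
          rw [← zpow_natCast, ← zpow_natCast ((gen_b m n)) n]
          rw [← zpow_neg_one, ← zpow_add]
          congr 1
          push_cast [Nat.cast_sub hn1]
          omega
        rw [this, hb]
        simp [gen_b, PresentedGroup.of]
      · exact ⟨0, -1, by simp [gen_a, PresentedGroup.of]⟩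
    | mul x y ihx ihy =>
      obtain ⟨j, k, hx⟩ := ihx
      obtain ⟨j', k', hy⟩ := ihy
      refine ⟨j + j', (-3)^j' * k + k', ?_⟩
      have : PresentedGroup.mk (GRels m n) (x * y)
          = PresentedGroup.mk (GRels m n) x * PresentedGroup.mk (GRels m n) y := map_mul _ _ _
      rw [this, hx, hy]
      calc (gen_b m n) ^ j * (gen_a m n) ^ k * ((gen_b m n) ^ j' * (gen_a m n) ^ k')
          = (gen_b m n) ^ j * ((gen_a m n) ^ k * (gen_b m n) ^ j') * (gen_a m n) ^ k' := by group
      _ = (gen_b m n) ^ j * ((gen_b m n) ^ j' * (gen_a m n) ^ ((-3)^j' * k)) * (gen_a m n) ^ k' := by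
          rw [hmove]
      _ = (gen_b m n) ^ (j + j') * (gen_a m n) ^ ((-3)^j' * k + k') := by
          rw [pow_add, zpow_add]; group
end




lemma cop (m : ℕ) (hm : ∃ i, m = 2^i) (hm16 : 16 ≤ m) : Nat.Coprime (m-3) m := by
  obtain ⟨i, rfl⟩ := hm
  apply Nat.Coprime.pow_right
  apply Odd.coprime_two_right
  have h2 : 2 ∣ 2^i := dvd_pow_self 2 (by rintro rfl; simp at hm16)
  obtain ⟨c, hc⟩ := h2
  refine ⟨c - 2, by omega⟩


lemma sd_rel {N G : Type*} [Group N] [Group G] {φ : G →* MulAut N} (α : N) (β : G)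
    (h : (φ β)⁻¹ α⁻¹ = α ^ 3) :
    (SemidirectProduct.inr β)⁻¹ * (SemidirectProduct.inl α)⁻¹ * SemidirectProduct.inr β *
      SemidirectProduct.inl α * ((SemidirectProduct.inl α : N ⋊[φ] G) ^ 4)⁻¹ = 1 := by
  rw [← map_inv SemidirectProduct.inr, ← map_inv SemidirectProduct.inl,
    ← map_pow SemidirectProduct.inl, ← map_inv SemidirectProduct.inl]
  have key : (SemidirectProduct.inr β⁻¹ : N ⋊[φ] G) * SemidirectProduct.inl α⁻¹ *
      SemidirectProduct.inr β = SemidirectProduct.inl ((φ β)⁻¹ α⁻¹) :=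
    (SemidirectProduct.inl_aut_inv β α⁻¹).symm
  calc SemidirectProduct.inr β⁻¹ * SemidirectProduct.inl α⁻¹ * SemidirectProduct.inr β *
        SemidirectProduct.inl α * SemidirectProduct.inl (α ^ 4)⁻¹
      = SemidirectProduct.inl ((φ β)⁻¹ α⁻¹) * SemidirectProduct.inl α *
        SemidirectProduct.inl (α ^ 4)⁻¹ := by rw [← key]
    _ = SemidirectProduct.inl (((φ β)⁻¹ α⁻¹) * α * (α ^ 4)⁻¹) := by rw [map_mul, map_mul]
    _ = 1 := by rw [h, ← map_one SemidirectProduct.inl]; congr 1; group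

section
open SemidirectProduct Multiplicative
variable (m n : ℕ) (hcop : Nat.Coprime (m-3) m)

/-- The unit `(-3)⁻¹` of `ZMod m`. -/
def wUnit : (ZMod m)ˣ := (ZMod.unitOfCoprime _ hcop)⁻¹

/-- `AddAut A →* MulAut (Multiplicative A)`. -/
def addAutToMulAut (A : Type*) [AddGroup A] : Multiplicative (AddAut A) →* MulAut (Multiplicative A) where
  toFun f := AddEquiv.toMultiplicative f.toAdd
  map_one' := rfl
  map_mul' _ _ := rfl

/-- units act on `Multiplicative (ZMod m)` -/
def autHom : (ZMod m)ˣ →* MulAut (Multiplicative (ZMod m)) :=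
  (addAutToMulAut (ZMod m)).comp (DistribMulAction.toAddAut (ZMod m)ˣ (ZMod m))

lemma autHom_apply (u : (ZMod m)ˣ) (y : ZMod m) :
    autHom m u (Multiplicative.ofAdd y) = Multiplicative.ofAdd ((u : ZMod m) * y) := rfl

lemma wUnit_pow (hm3 : 3 ≤ m) (hneg3 : ((-3 : ZMod m))^n = 1) : (wUnit m hcop) ^ n = 1 := by
  have hcast : ((ZMod.unitOfCoprime _ hcop : (ZMod m)ˣ) : ZMod m) = -3 := by
    rw [ZMod.coe_unitOfCoprime]
    push_cast [Nat.cast_sub hm3]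
    simp [ZMod.natCast_self]
  have hu : (ZMod.unitOfCoprime _ hcop : (ZMod m)ˣ) ^ n = 1 := by
    ext
    push_cast [hcast]
    exact hneg3
  rw [wUnit, inv_pow, hu, inv_one]

variable (hw : (wUnit m hcop) ^ n = 1)

/-- The action `ZMod n →* MulAut (Multiplicative (ZMod m))`. -/
def phi : Multiplicative (ZMod n) →* MulAut (Multiplicative (ZMod m)) :=
  AddMonoidHom.toMultiplicativeLeft
    (ZMod.lift n ⟨zmultiplesHom _ (Additive.ofMul (autHom m (wUnit m hcop))), by
      have : autHom m (wUnit m hcop) ^ n = 1 := by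
        rw [← map_pow, hw, map_one]
      simp only [zmultiplesHom_apply]
      rw [← ofMul_zpow]
      simp [this]⟩)

lemma phi_ofAdd_one :
    phi m n hcop hw (Multiplicative.ofAdd (1 : ZMod n)) = autHom m (wUnit m hcop) := by
  have h1 : Multiplicative.ofAdd (1 : ZMod n) = Multiplicative.ofAdd (((1:ℤ) : ZMod n)) := by
    norm_num
  rw [phi, h1]
  simp only [AddMonoidHom.toMultiplicativeLeft_apply_apply, toAdd_ofAdd, ZMod.lift_coe,
    zmultiplesHom_apply, one_zsmul, toMul_ofMul]

lemma ucast (hm3 : 3 ≤ m) : ((ZMod.unitOfCoprime _ hcop : (ZMod m)ˣ) : ZMod m) = -3 := by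
  rw [ZMod.coe_unitOfCoprime]
  push_cast [Nat.cast_sub hm3]
  simp [ZMod.natCast_self]

/-- the map on generators -/
def fmap : Bool → Multiplicative (ZMod m) ⋊[phi m n hcop hw] Multiplicative (ZMod n) :=
  fun x => if x then SemidirectProduct.inl (ofAdd (1:ZMod m))
    else SemidirectProduct.inr (ofAdd (1:ZMod n))

lemma relcheck (hm3 : 3 ≤ m) : ∀ r ∈ GRels m n, FreeGroup.lift (fmap m n hcop hw) r = 1 := by
  set α := ofAdd (1:ZMod m)
  set β := ofAdd (1:ZMod n)
  rintro r (rfl | rfl | rfl)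
  · rw [map_pow, FreeGroup.lift_apply_of]
    show (SemidirectProduct.inl α)^m = 1
    rw [← map_pow, ← map_one (SemidirectProduct.inl (φ := phi m n hcop hw))]
    congr 1
    show ofAdd (1:ZMod m) ^ m = 1
    rw [← ofAdd_nsmul]
    simp [ZMod.natCast_self]
  · rw [map_pow, FreeGroup.lift_apply_of]
    show (SemidirectProduct.inr (φ := phi m n hcop hw) β)^n = 1
    rw [← map_pow, ← map_one (SemidirectProduct.inr (φ := phi m n hcop hw))]
    congr 1
    show ofAdd (1:ZMod n) ^ n = 1
    rw [← ofAdd_nsmul]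
    simp [ZMod.natCast_self]
  · simp only [map_mul, map_inv, map_pow, FreeGroup.lift_apply_of]
    show (SemidirectProduct.inr β)⁻¹ * (SemidirectProduct.inl α)⁻¹ *
      SemidirectProduct.inr β * SemidirectProduct.inl α * (SemidirectProduct.inl α ^ 4)⁻¹ = 1
    apply sd_rel
    rw [phi_ofAdd_one, ← map_inv, wUnit, inv_inv]
    show autHom m _ (ofAdd (1:ZMod m))⁻¹ = _
    rw [← ofAdd_neg, autHom_apply, ucast m hcop hm3]
    have : ((-3 : ZMod m)) * (-1) = 3 := by ring
    rw [this]
    show _ = ofAdd (1:ZMod m) ^ 3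
    rw [← ofAdd_nsmul]
    norm_num

/-- the homomorphism G → H -/
def piHom (hm3 : 3 ≤ m) :
    Gmn m n →* Multiplicative (ZMod m) ⋊[phi m n hcop hw] Multiplicative (ZMod n) :=
  PresentedGroup.toGroup (relcheck m n hcop hw hm3)

lemma piHom_surj (hm3 : 3 ≤ m) (hm0 : NeZero m) (hn0 : NeZero n) :
    Function.Surjective (piHom m n hcop hw hm3) := by
  intro h
  refine ⟨gen_a m n ^ (toAdd h.left).val * gen_b m n ^ (toAdd h.right).val, ?_⟩
  have hpa : piHom m n hcop hw hm3 (gen_a m n) = SemidirectProduct.inl (ofAdd (1:ZMod m)) := by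
    show piHom m n hcop hw hm3 (PresentedGroup.of true) = _
    rw [piHom, PresentedGroup.toGroup.of]
    rfl
  have hpb : piHom m n hcop hw hm3 (gen_b m n) = SemidirectProduct.inr (ofAdd (1:ZMod n)) := by
    show piHom m n hcop hw hm3 (PresentedGroup.of false) = _
    rw [piHom, PresentedGroup.toGroup.of]
    rfl
  rw [map_mul, map_pow, map_pow, hpa, hpb]
  have e1 : (SemidirectProduct.inl (φ := phi m n hcop hw) (ofAdd (1:ZMod m))) ^ (toAdd h.left).val
      = SemidirectProduct.inl h.left := by
    rw [← map_pow]
    congr 1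
    rw [← ofAdd_nsmul]
    simp [nsmul_eq_mul, ZMod.natCast_val, ZMod.cast_id]
  have e2 : (SemidirectProduct.inr (φ := phi m n hcop hw) (ofAdd (1:ZMod n))) ^ (toAdd h.right).val
      = SemidirectProduct.inr h.right := by
    rw [← map_pow]
    congr 1
    rw [← ofAdd_nsmul]
    simp [nsmul_eq_mul, ZMod.natCast_val, ZMod.cast_id]
  rw [e1, e2, SemidirectProduct.inl_left_mul_inr_right]

/-- semidirect product as a product type -/
def sdEquiv {N G : Type*} [Group N] [Group G] (φ : G →* MulAut N) :
    (N ⋊[φ] G) ≃ N × G where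
  toFun g := (g.left, g.right)
  invFun p := ⟨p.1, p.2⟩
  left_inv g := rfl
  right_inv p := rfl

end

theorem Gmn_card (m n : ℕ) (hm : ∃ i, m = 2 ^ i) (hn : ∃ j, n = 2 ^ j)
    (hm16 : 16 ≤ m) (hn4 : 4 ≤ n) (hmn : m ≤ 4 * n) :
    Nat.card (Gmn m n) = m * n := by
  have hm0 : NeZero m := ⟨by omega⟩
  have hn0 : NeZero n := ⟨by omega⟩
  have hcop := cop m hm hm16
  have hw := wUnit_pow m n hcop (by omega) (neg3_pow m n hm hn hn4 hmn)
  -- upper bound via normal form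
  set F : ZMod n × ZMod m → Gmn m n :=
    fun p => gen_b m n ^ p.1.val * gen_a m n ^ (p.2.val : ℤ) with hF
  have hFsurj : Function.Surjective F := by
    intro g
    obtain ⟨j, k, rfl⟩ := normal_form m n (by omega) g
    refine ⟨((j : ZMod n), ((k : ℤ) : ZMod m)), ?_⟩
    have e1 : gen_b m n ^ ((j : ZMod n)).val = gen_b m n ^ j := by
      rw [ZMod.val_natCast]
      conv_rhs => rw [← Nat.div_add_mod j n]
      rw [pow_add, pow_mul, hb, one_pow, one_mul]
    have e2 : gen_a m n ^ ((((k : ℤ) : ZMod m)).val : ℤ) = gen_a m n ^ k := by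
      rw [ZMod.val_intCast]
      conv_rhs => rw [← Int.emod_add_mul_ediv k m]
      rw [zpow_add, zpow_mul]
      have : gen_a m n ^ (m : ℤ) = 1 := by
        rw [zpow_natCast, ha]
      rw [this, one_zpow, mul_one]
    rw [hF]
    simp only
    rw [e1, e2]
  have hfin : Finite (Gmn m n) := Finite.of_surjective F hFsurj
  have hupper : Nat.card (Gmn m n) ≤ n * m := by
    have := Nat.card_le_card_of_surjective F hFsurj
    simpa [Nat.card_prod, Nat.card_zmod] using this
  have hlower : m * n ≤ Nat.card (Gmn m n) := by
    have hsurj := piHom_surj m n hcop hw (by omega) hm0 hn0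
    have := Nat.card_le_card_of_surjective _ hsurj
    have hcard : Nat.card (Multiplicative (ZMod m) ⋊[phi m n hcop hw] Multiplicative (ZMod n))
        = m * n := by
      rw [Nat.card_congr (sdEquiv _), Nat.card_prod,
        Nat.card_congr (Multiplicative.toAdd (α := ZMod m)),
        Nat.card_congr (Multiplicative.toAdd (α := ZMod n)),
        Nat.card_zmod, Nat.card_zmod]
    omega
  exact le_antisymm (hupper.trans_eq (Nat.mul_comm n m)) hlower
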